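/- Suppose n > 2N(Ω, r/3), there exist 1/2 < α₂ ≤ α₁ < 1 with 2 L_f L_q r ρ_max ≤ e_min (1−α₁)(1−α₂), and L_f ρ_max/e_min ≤ 1/2. Then the probability that p*_{n,i} = 0 for all i = 1,…,n is at least 1 − 2n·exp(−C₂·((n−1)r^d/A)·(ρ_max/(2 a_max))²) − (n/2)·exp(−n·min_{z∈Ω} A^{−1}∫_Ω 1{‖y−z‖ ≤ r/3} σ(y) dy). -/

import Mathlib

open Set Metric MeasureTheory Filter
open scoped ENNReal Topology


private lemma lintegral_pi_prod_aux {E : Type*} [MeasurableSpace E] (ν : Measure E)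
    [IsProbabilityMeasure ν] :
    ∀ (m : ℕ) (g : Fin m → E → ℝ≥0∞), (∀ j, Measurable (g j)) →
      ∫⁻ y, ∏ j, g j (y j) ∂(Measure.pi fun _ : Fin m => ν) = ∏ j, ∫⁻ x, g j x ∂ν := by
  intro m
  induction m with
  | zero =>
      intro g hg
      simp [lintegral_const]
  | succ m ih =>
      intro g hg
      have hmp := measurePreserving_piFinSuccAbove (fun _ : Fin (m + 1) => ν) 0
      set G : (Fin m → E) → ℝ≥0∞ := fun y => ∏ j, g j.succ (y j) with hG
      have hGmeas : Measurable G :=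
        Finset.measurable_prod _ fun j _ => (hg j.succ).comp (measurable_pi_apply j)
      have hGmeas' : Measurable fun p : E × (Fin m → E) => g 0 p.1 * G p.2 :=
        ((hg 0).comp measurable_fst).mul (hGmeas.comp measurable_snd)
      calc ∫⁻ y, ∏ j, g j (y j) ∂(Measure.pi fun _ : Fin (m + 1) => ν)
          = ∫⁻ y, (fun p : E × (Fin m → E) => g 0 p.1 * G p.2)
              ((MeasurableEquiv.piFinSuccAbove (fun _ : Fin (m + 1) => E) 0) y)
              ∂(Measure.pi fun _ : Fin (m + 1) => ν) := by
            refine lintegral_congr fun y => ?_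
            rw [Fin.prod_univ_succ]
            simp [MeasurableEquiv.piFinSuccAbove_apply, Fin.zero_succAbove, hG, Fin.tail]
        _ = ∫⁻ p : E × (Fin m → E), g 0 p.1 * G p.2
              ∂(ν.prod (Measure.pi fun _ : Fin m => ν)) := by
            rw [← hmp.map_eq, lintegral_map hGmeas' (MeasurableEquiv.measurable _)]
        _ = (∫⁻ x, g 0 x ∂ν) * ∏ j : Fin m, ∫⁻ x, g j.succ x ∂ν := by
            rw [lintegral_prod_mul (hg 0).aemeasurable hGmeas.aemeasurable]
            rw [hG, ih _ fun j => hg j.succ]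
        _ = ∏ j, ∫⁻ x, g j (x) ∂ν := (Fin.prod_univ_succ fun j => ∫⁻ x, g j x ∂ν).symm

private lemma concave_tangent_aux {f : ℝ → ℝ} (hconc : ConcaveOn ℝ (Ici 0) f)
    (hdiff : ContDiff ℝ 1 f) (hf0 : f 0 = 0) {x : ℝ} (hx : 0 ≤ x) :
    f x ≤ deriv f 0 * x := by
  rcases eq_or_lt_of_le hx with h | h
  · simp [← h, hf0]
  have key : ∀ t ∈ Ioo (0:ℝ) x, f x ≤ f t / t * x := by
    intro t ht
    have h1 := hconc.slope_anti_adjacent (self_mem_Ici (α := ℝ))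
      (mem_Ici.2 hx) ht.1 ht.2
    rw [hf0, sub_zero, sub_zero] at h1
    -- h1 : (f x - f t) / (x - t) ≤ f t / t
    have hxt : 0 < x - t := sub_pos.2 ht.2
    have h2 : f x - f t ≤ f t / t * (x - t) := by
      rw [div_le_iff₀ hxt] at h1; linarith
    have h3 : f t / t * t = f t := div_mul_cancel₀ _ (ne_of_gt ht.1)
    nlinarith [h2, h3]
  have hder : HasDerivAt f (deriv f 0) 0 :=
    ((hdiff.differentiable one_ne_zero) 0).hasDerivAt
  have hslope : Tendsto (slope f 0) (𝓝[≠] 0) (𝓝 (deriv f 0)) :=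
    hasDerivAt_iff_tendsto_slope.mp hder
  have hmono : (𝓝[>] (0:ℝ)) ≤ 𝓝[≠] 0 :=
    nhdsWithin_mono 0 fun t ht => ne_of_gt ht
  have htend : Tendsto (fun t => slope f 0 t * x) (𝓝[>] (0:ℝ))
      (𝓝 (deriv f 0 * x)) := (hslope.mono_left hmono).mul_const x
  refine ge_of_tendsto htend ?_
  filter_upwards [Ioo_mem_nhdsGT_of_mem (by exact ⟨le_refl 0, h⟩ : (0:ℝ) ∈ Ico 0 x)]
    with t ht
  have : slope f 0 t = f t / t := by
    rw [slope_def_field]; rw [hf0]; ring_nf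
  rw [this]
  exact key t ht

private lemma chernoff_count_aux {E : Type*} [MeasurableSpace E] (ν : Measure E)
    [IsProbabilityMeasure ν] (m : ℕ) (B : Set E) (hB : MeasurableSet B)
    (q : ℝ) (hq0 : 0 ≤ q) (hq : ν B ≤ ENNReal.ofReal q) (θ : ℝ)
    (hpi : ∀ (g : Fin m → E → ℝ≥0∞), (∀ j, Measurable (g j)) →
      ∫⁻ y, ∏ j, g j (y j) ∂(Measure.pi fun _ : Fin m => ν) = ∏ j, ∫⁻ x, g j x ∂ν) :
    (Measure.pi fun _ : Fin m => ν)
        {y | θ < ∑ j, B.indicator (fun _ => (1:ℝ)) (y j)}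
      ≤ ENNReal.ofReal (Real.exp ((m : ℝ) * q - Real.log 2 * θ)) := by
  set π := (Measure.pi fun _ : Fin m => ν) with hπ
  set F : (Fin m → E) → ℝ := fun y => ∑ j, B.indicator (fun _ => (1:ℝ)) (y j) with hF
  have hind_meas : Measurable (B.indicator (fun _ => (1:ℝ))) :=
    measurable_const.indicator hB
  have hFmeas : Measurable F := by
    refine Finset.measurable_sum _ fun j _ => ?_
    exact hind_meas.comp (measurable_pi_apply j)
  have hexp_meas : Measurable fun y => ENNReal.ofReal (Real.exp (Real.log 2 * (F y - θ))) :=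
    (measurable_const.mul (hFmeas.sub measurable_const)).exp.ennreal_ofReal
  have hlog2 : (0:ℝ) ≤ Real.log 2 := Real.log_nonneg one_le_two
  -- Markov step
  have step1 : π {y | θ < F y} ≤ ∫⁻ y, ENNReal.ofReal (Real.exp (Real.log 2 * (F y - θ))) ∂π := by
    rw [← setLIntegral_one]
    refine le_trans (setLIntegral_mono hexp_meas fun y hy => ?_)
      (setLIntegral_le_lintegral _ _)
    rw [ENNReal.one_le_ofReal]
    exact Real.one_le_exp (mul_nonneg hlog2 (sub_nonneg.2 (le_of_lt hy)))
  set g : E → ℝ≥0∞ := fun v => 1 + B.indicator (fun _ => (1:ℝ≥0∞)) v with hg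
  have hgmeas : Measurable g :=
    (measurable_const.indicator hB).const_add 1
  -- pointwise product form
  have hptwise : ∀ y, ENNReal.ofReal (Real.exp (Real.log 2 * (F y - θ)))
      = ENNReal.ofReal (Real.exp (-(Real.log 2 * θ))) * ∏ j, g (y j) := by
    intro y
    have h2 : Real.log 2 * (F y - θ)
        = -(Real.log 2 * θ) + ∑ j, Real.log 2 * B.indicator (fun _ => (1:ℝ)) (y j) := by
      simp only [hF]; rw [mul_sub, Finset.mul_sum]; ring
    have h3 : ∀ j : Fin m, ENNReal.ofReal
        (Real.exp (Real.log 2 * B.indicator (fun _ => (1:ℝ)) (y j))) = g (y j) := by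
      intro j
      by_cases hj : y j ∈ B
      · simp only [hg, indicator_of_mem hj, mul_one, Real.exp_log two_pos]
        rw [show ((2:ℝ)) = 1 + 1 by norm_num, ENNReal.ofReal_add one_pos.le one_pos.le,
          ENNReal.ofReal_one]
      · simp only [hg, indicator_of_notMem hj, mul_zero, Real.exp_zero,
          ENNReal.ofReal_one, add_zero]
    rw [h2, Real.exp_add, Real.exp_sum, ENNReal.ofReal_mul (Real.exp_nonneg _),
      ENNReal.ofReal_prod_of_nonneg fun j _ => Real.exp_nonneg _]
    congr 1
    exact Finset.prod_congr rfl fun j _ => h3 j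
  have hgint : ∫⁻ v, g v ∂ν ≤ ENNReal.ofReal (Real.exp q) := by
    calc ∫⁻ v, g v ∂ν = 1 + ν B := by
          rw [hg]
          rw [lintegral_add_left measurable_const, lintegral_one, measure_univ,
            lintegral_indicator_const hB, one_mul]
      _ ≤ 1 + ENNReal.ofReal q := add_le_add le_rfl hq
      _ = ENNReal.ofReal (1 + q) := by
          rw [ENNReal.ofReal_add one_pos.le hq0, ENNReal.ofReal_one]
      _ ≤ ENNReal.ofReal (Real.exp q) := ENNReal.ofReal_le_ofReal (by
          have := Real.add_one_le_exp q; linarith)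
  have step2 : ∫⁻ y, ENNReal.ofReal (Real.exp (Real.log 2 * (F y - θ))) ∂π
      ≤ ENNReal.ofReal (Real.exp (-(Real.log 2 * θ))) * ENNReal.ofReal (Real.exp ((m:ℝ) * q)) := by
    calc ∫⁻ y, ENNReal.ofReal (Real.exp (Real.log 2 * (F y - θ))) ∂π
        = ∫⁻ y, ENNReal.ofReal (Real.exp (-(Real.log 2 * θ))) * ∏ j, g (y j) ∂π :=
          lintegral_congr hptwise
      _ = ENNReal.ofReal (Real.exp (-(Real.log 2 * θ))) * ∫⁻ y, ∏ j, g (y j) ∂π :=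
          lintegral_const_mul _ (Finset.measurable_prod _ fun j _ =>
            hgmeas.comp (measurable_pi_apply j))
      _ = ENNReal.ofReal (Real.exp (-(Real.log 2 * θ))) * ∏ _j : Fin m, ∫⁻ v, g v ∂ν := by
          rw [hpi (fun _ => g) (fun _ => hgmeas)]
      _ ≤ ENNReal.ofReal (Real.exp (-(Real.log 2 * θ)))
            * ∏ _j : Fin m, ENNReal.ofReal (Real.exp q) :=
          mul_le_mul_right (Finset.prod_le_prod' fun j _ => hgint) _
      _ = ENNReal.ofReal (Real.exp (-(Real.log 2 * θ))) * ENNReal.ofReal (Real.exp ((m:ℝ) * q)) := by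
          rw [Finset.prod_const, Finset.card_univ, Fintype.card_fin,
            ← ENNReal.ofReal_pow (Real.exp_nonneg _), ← Real.exp_nat_mul]
  refine le_trans (le_trans step1 step2) ?_
  rw [← ENNReal.ofReal_mul (Real.exp_nonneg _), ← Real.exp_add]
  exact ENNReal.ofReal_le_ofReal (Real.exp_le_exp.2 (by ring_nf; exact le_refl _))

set_option maxHeartbeats 2000000 in
theorem stmt10
    (d : ℕ) (hd : 1 ≤ d)
    (Ω : Set (EuclideanSpace ℝ (Fin d)))
    (hΩ_closed : IsClosed Ω) (hΩ_bdd : Bornology.IsBounded Ω) (hΩ_conn : IsConnected Ω)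
    (a e σ : EuclideanSpace ℝ (Fin d) → ℝ)
    (La Le Lσ : ℝ)
    (ha_diff : ContDiffOn ℝ 1 a Ω) (he_diff : ContDiffOn ℝ 1 e Ω)
    (hσ_diff : ContDiffOn ℝ 1 σ Ω)
    (ha_lip : LipschitzOnWith (Real.toNNReal La) a Ω)
    (he_lip : LipschitzOnWith (Real.toNNReal Le) e Ω)
    (hσ_lip : LipschitzOnWith (Real.toNNReal Lσ) σ Ω)
    (amin amax emin emax σmin σmax : ℝ)
    (hamin : 0 < amin) (hemin : 0 < emin) (hσmin : 0 < σmin)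
    (ha_bnd : ∀ z ∈ Ω, a z ∈ Icc amin amax)
    (he_bnd : ∀ z ∈ Ω, e z ∈ Icc emin emax)
    (hσ_bnd : ∀ z ∈ Ω, σ z ∈ Icc σmin σmax)
    (A : ℝ) (hA : A = ∫ y in Ω, σ y)
    (r : ℝ) (hr : 0 < r)
    (cz : EuclideanSpace ℝ (Fin d) → ℝ → ℝ) (cmax : ℝ)
    (hcz_bnd : ∀ z ∈ Ω, ∀ x : ℝ, 0 ≤ x → cz z x ∈ Icc 0 cmax)
    (hcz_pos : ∀ z ∈ Ω, ∀ x ∈ Ico (0:ℝ) 1, 0 < cz z x)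
    (hcz_zero : ∀ z ∈ Ω, ∀ x : ℝ, 1 < x → cz z x = 0)
    (hcz_int : ∀ z ∈ Ω, IntegrableOn (cz z) (Ici 0))
    (hcz_unif : UniformContinuousOn
      (fun p : EuclideanSpace ℝ (Fin d) × ℝ => cz p.1 p.2) (Ω ×ˢ Ico (0:ℝ) 1))
    (c : EuclideanSpace ℝ (Fin d) → EuclideanSpace ℝ (Fin d) → ℝ)
    (hc : ∀ z y, c z y = cz z (dist z y / r) / r ^ d)
    (f : ℝ → ℝ)
    (hf_mono : MonotoneOn f (Ici (0:ℝ)))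
    (hf_conc : ConcaveOn ℝ (Ici (0:ℝ)) f)
    (hf_diff : ContDiff ℝ 1 f)
    (hf_nonneg : ∀ x ≥ (0:ℝ), 0 ≤ f x)
    (hf0 : f 0 = 0)
    (Lf : ℝ) (hLf : Lf = deriv f 0) (hLf_pos : 0 < Lf)
    (ρ : EuclideanSpace ℝ (Fin d) → ℝ) (Lρ : ℝ)
    (hρ : ∀ z ∈ Ω, ρ z = ∫ y in Ω, a y * c z y * σ y)
    (hρ_lip : LipschitzOnWith (Real.toNNReal Lρ) ρ Ω)
    (vd Lq ρmax C₂ : ℝ)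
    (hvd : vd = (volume (ball (0 : EuclideanSpace ℝ (Fin d)) 1)).toReal)
    (hLq : Lq = Real.sqrt d / emin * (2 * Lf * Lρ + Le))
    (hρmax : ρmax = amax * cmax * σmax * vd)
    (hC₂ : C₂ = (3 * cmax ^ 2 * σmax * vd)⁻¹)
    (W : Type) [MeasurableSpace W] (P : Measure W) [IsProbabilityMeasure P]
    (n : ℕ) (hn2 : 2 ≤ n)
    (z : W → Fin n → EuclideanSpace ℝ (Fin d))
    (hz_meas : ∀ i, Measurable fun ω => z ω i)
    (hz_mem : ∀ ω i, z ω i ∈ Ω)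
    (hz_indep : ProbabilityTheory.iIndepFun
      (fun i ω => z ω i) P)
    (hz_law : ∀ i, Measure.map (fun ω => z ω i) P =
      (volume.restrict Ω).withDensity (fun y => ENNReal.ofReal (σ y / A)))
    (S : W → (Fin n → ℝ) → Fin n → ℝ)
    (hS : ∀ ω p i, S ω p i =
      (A / ((n : ℝ) - 1)) * ∑ j ∈ Finset.univ.erase i, a (z ω j) * c (z ω i) (z ω j) * p j)
    (En : W → (Fin n → ℝ) → Fin n → ℝ)
    (hEn : ∀ ω p i, En ω p i = f (S ω p i) / (e (z ω i) + f (S ω p i)))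
    (pstar : W → Fin n → ℝ)
    (hpstar : ∀ ω, IsGreatest
      {p : Fin n → ℝ | (∀ i, p i ∈ Icc (0:ℝ) 1) ∧ En ω p = p} (pstar ω))
    (NΩ : ℕ)
    (hNΩ : IsLeast {k : ℕ | ∃ cs : Fin k → EuclideanSpace ℝ (Fin d),
      Ω ⊆ ⋃ i, closedBall (cs i) (r / 3)} NΩ)
    (hn_big : 2 * NΩ < n)
    (hcond : ∃ α₁ α₂ : ℝ, 1/2 < α₂ ∧ α₂ ≤ α₁ ∧ α₁ < 1 ∧
      2 * Lf * Lq * r * ρmax ≤ emin * (1 - α₁) * (1 - α₂))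
    (hnonviable : Lf * ρmax / emin ≤ 1/2) :
    ENNReal.ofReal (1
      - 2 * n * Real.exp (-C₂ * (((n : ℝ) - 1) * r ^ d / A) *
          (ρmax / (2 * amax)) ^ 2)
      - ((n : ℝ) / 2) * Real.exp (-(n : ℝ) *
          sInf ((fun z₀ => A⁻¹ * ∫ y in Ω ∩ closedBall z₀ (r / 3), σ y) '' Ω)))
      ≤ P {ω | ∀ i, pstar ω i = 0} := by
  classical
  obtain ⟨m, rfl⟩ : ∃ m, n = m + 1 := ⟨n - 1, by omega⟩
  have hm1 : 1 ≤ m := by omega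
  obtain ⟨z₀, hz₀⟩ := hΩ_conn.nonempty
  have hΩ_meas : MeasurableSet Ω := hΩ_closed.measurableSet
  have hamax : 0 < amax := lt_of_lt_of_le hamin ((ha_bnd z₀ hz₀).1.trans (ha_bnd z₀ hz₀).2)
  have hσmax : 0 < σmax := lt_of_lt_of_le hσmin ((hσ_bnd z₀ hz₀).1.trans (hσ_bnd z₀ hz₀).2)
  have hcmax : 0 < cmax :=
    lt_of_lt_of_le (hcz_pos z₀ hz₀ 0 ⟨le_refl 0, one_pos⟩) (hcz_bnd z₀ hz₀ 0 le_rfl).2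
  have hrd : (0:ℝ) < r ^ d := pow_pos hr d
  set ν : Measure (EuclideanSpace ℝ (Fin d)) := (volume.restrict Ω).withDensity (fun y => ENNReal.ofReal (σ y / A))
    with hνdef
  haveI hν_prob : IsProbabilityMeasure ν := by
    rw [← hz_law 0]; exact Measure.isProbabilityMeasure_map (hz_meas 0).aemeasurable
  -- A is positive
  have hA_pos : (0:ℝ) < A := by
    by_contra hA'
    push_neg at hA'
    have h1 : ν univ = 1 := measure_univ
    have h0 : ν univ = 0 := by
      rw [hνdef, withDensity_apply _ MeasurableSet.univ, Measure.restrict_univ]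
      have hae : ∀ᵐ y ∂(volume.restrict Ω), ENNReal.ofReal (σ y / A) = 0 := by
        filter_upwards [ae_restrict_mem hΩ_meas] with y hy
        exact ENNReal.ofReal_eq_zero.2 (div_nonpos_of_nonneg_of_nonpos
          (le_of_lt (lt_of_lt_of_le hσmin (hσ_bnd y hy).1)) hA')
      rw [lintegral_congr_ae hae, lintegral_zero]
    rw [h0] at h1
    exact zero_ne_one h1
  have hvd_pos : (0:ℝ) < vd := by
    rw [hvd]
    exact ENNReal.toReal_pos (ne_of_gt (measure_ball_pos _ _ one_pos)) measure_ball_lt_top.ne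
  set qb : ℝ := σmax * vd * r ^ d / A with hqbdef
  have hqb0 : (0:ℝ) ≤ qb := by rw [hqbdef]; positivity
  -- the law of each point gives mass at most qb to any ball of radius r
  have hb1 : (volume (ball (0:EuclideanSpace ℝ (Fin d)) 1)) = ENNReal.ofReal vd := by
    rw [hvd, ENNReal.ofReal_toReal measure_ball_lt_top.ne]
  have hball_law : ∀ w : EuclideanSpace ℝ (Fin d), ν (closedBall w r) ≤ ENNReal.ofReal qb := by
    intro w
    calc ν (closedBall w r)
        = ∫⁻ y in closedBall w r, ENNReal.ofReal (σ y / A) ∂(volume.restrict Ω) := by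
          rw [hνdef, withDensity_apply _ measurableSet_closedBall]
      _ = ∫⁻ y in closedBall w r ∩ Ω, ENNReal.ofReal (σ y / A) ∂volume := by
          rw [Measure.restrict_restrict measurableSet_closedBall]
      _ ≤ ∫⁻ _y in closedBall w r ∩ Ω, ENNReal.ofReal (σmax / A) ∂volume := by
          refine setLIntegral_mono measurable_const fun y hy => ?_
          exact ENNReal.ofReal_le_ofReal
            (by gcongr; exact (hσ_bnd y hy.2).2)
      _ = ENNReal.ofReal (σmax / A) * volume (closedBall w r ∩ Ω) :=
          setLIntegral_const _ _
      _ ≤ ENNReal.ofReal (σmax / A) * volume (closedBall w r) :=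
          mul_le_mul_right (measure_mono inter_subset_left) _
      _ ≤ ENNReal.ofReal qb := by
          rw [Measure.addHaar_closedBall volume w hr.le, finrank_euclideanSpace_fin, hb1,
            ← ENNReal.ofReal_mul (by positivity), ← ENNReal.ofReal_mul (by positivity)]
          refine ENNReal.ofReal_le_ofReal (le_of_eq ?_)
          rw [hqbdef]; field_simp
  -- the joint law is the product measure
  have hzvec_meas : Measurable fun ω (i : Fin (m+1)) => z ω i :=
    measurable_pi_lambda _ hz_meas
  have hmap : Measure.pi (fun _ : Fin (m+1) => ν)
      = Measure.map (fun ω i => z ω i) P := by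
    refine Measure.pi_eq fun s hs => ?_
    rw [Measure.map_apply hzvec_meas (MeasurableSet.univ_pi hs)]
    have hpre : (fun ω (i : Fin (m+1)) => z ω i) ⁻¹' (univ.pi s)
        = ⋂ i ∈ Finset.univ, (fun ω => z ω i) ⁻¹' (s i) := by
      ext ω; simp [Set.mem_univ_pi]
    rw [hpre, hz_indep.measure_inter_preimage_eq_mul Finset.univ (fun i _ => hs i)]
    refine Finset.prod_congr rfl fun i _ => ?_
    rw [← Measure.map_apply (hz_meas i) (hs i), hz_law i]
  -- product lintegral lemma specialized
  have hpi_prod := lintegral_pi_prod_aux ν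
  -- threshold
  set θ : ℝ := (m:ℝ) * emin * r ^ d / (Lf * A * amax * cmax) with hθdef
  -- bad events
  set Bad : Fin (m+1) → Set W := fun i =>
    {ω | θ < ∑ j ∈ Finset.univ.erase i,
      (closedBall (z ω i) r).indicator (fun _ => (1:ℝ)) (z ω j)} with hBaddef
  -- the deterministic extinction argument
  have hgood : ∀ ω, (∀ i, ω ∉ Bad i) → ∀ i, pstar ω i = 0 := by
    intro ω hω
    obtain ⟨hmem, hfix⟩ := (hpstar ω).1
    obtain ⟨i₀, -, hmax⟩ := Finset.exists_max_image Finset.univ (pstar ω)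
      ⟨0, Finset.mem_univ 0⟩
    set p := pstar ω with hp
    set M := p i₀ with hM
    have hM0 : 0 ≤ M := (hmem i₀).1
    have hM1 : M ≤ 1 := (hmem i₀).2
    have hωi := hω i₀
    rw [hBaddef] at hωi
    simp only [mem_setOf_eq, not_lt] at hωi
    -- each term of the sum is controlled by the indicator
    have hterm : ∀ j ∈ Finset.univ.erase i₀, a (z ω j) * c (z ω i₀) (z ω j) * p j
        ≤ (amax * cmax / r ^ d)
          * ((closedBall (z ω i₀) r).indicator (fun _ => (1:ℝ)) (z ω j)) * M := by
      intro j _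
      have hx0 : (0:ℝ) ≤ dist (z ω i₀) (z ω j) / r := div_nonneg dist_nonneg hr.le
      have hc0 : 0 ≤ c (z ω i₀) (z ω j) := by
        rw [hc]
        exact div_nonneg (hcz_bnd _ (hz_mem ω i₀) _ hx0).1 hrd.le
      by_cases hdist : dist (z ω j) (z ω i₀) ≤ r
      · rw [indicator_of_mem (mem_closedBall.2 hdist), mul_one]
        have hc2 : c (z ω i₀) (z ω j) ≤ cmax / r ^ d := by
          rw [hc]
          gcongr
          exact (hcz_bnd _ (hz_mem ω i₀) _ hx0).2
        have ha1 : 0 ≤ a (z ω j) := le_of_lt (lt_of_lt_of_le hamin (ha_bnd _ (hz_mem ω j)).1)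
        have ha2 : a (z ω j) ≤ amax := (ha_bnd _ (hz_mem ω j)).2
        have hpj0 : 0 ≤ p j := (hmem j).1
        have hpjM : p j ≤ M := hmax j (Finset.mem_univ j)
        have h1 : a (z ω j) * c (z ω i₀) (z ω j) ≤ amax * (cmax / r ^ d) :=
          mul_le_mul ha2 hc2 hc0 hamax.le
        have h2 : a (z ω j) * c (z ω i₀) (z ω j) * p j ≤ amax * (cmax / r ^ d) * M :=
          mul_le_mul h1 hpjM hpj0 (by positivity)
        calc a (z ω j) * c (z ω i₀) (z ω j) * p j ≤ amax * (cmax / r ^ d) * M := h2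
          _ = amax * cmax / r ^ d * M := by ring
      · have hgt : 1 < dist (z ω i₀) (z ω j) / r := by
          rw [dist_comm]
          exact (one_lt_div hr).2 (lt_of_not_ge hdist)
        have hczero : c (z ω i₀) (z ω j) = 0 := by
          rw [hc, hcz_zero _ (hz_mem ω i₀) _ hgt, zero_div]
        rw [hczero, indicator_of_notMem (fun hmem' => hdist (mem_closedBall.1 hmem'))]
        simp
    have hind0 : (0:ℝ) ≤ ∑ j ∈ Finset.univ.erase i₀,
        (closedBall (z ω i₀) r).indicator (fun _ => (1:ℝ)) (z ω j) := by
      refine Finset.sum_nonneg fun j _ => ?_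
      exact indicator_nonneg (fun _ _ => zero_le_one) _
    have hsum : ∑ j ∈ Finset.univ.erase i₀, a (z ω j) * c (z ω i₀) (z ω j) * p j
        ≤ (amax * cmax / r ^ d) * θ * M := by
      calc ∑ j ∈ Finset.univ.erase i₀, a (z ω j) * c (z ω i₀) (z ω j) * p j
          ≤ ∑ j ∈ Finset.univ.erase i₀, (amax * cmax / r ^ d)
              * ((closedBall (z ω i₀) r).indicator (fun _ => (1:ℝ)) (z ω j)) * M :=
            Finset.sum_le_sum hterm
        _ = (amax * cmax / r ^ d) * (∑ j ∈ Finset.univ.erase i₀,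
              (closedBall (z ω i₀) r).indicator (fun _ => (1:ℝ)) (z ω j)) * M := by
            rw [← Finset.sum_mul, ← Finset.mul_sum]
        _ ≤ (amax * cmax / r ^ d) * θ * M := by
            refine mul_le_mul_of_nonneg_right (mul_le_mul_of_nonneg_left hωi ?_) hM0
            positivity
    have hcast : ((m + 1 : ℕ):ℝ) - 1 = (m:ℝ) := by push_cast; ring
    have hS0 : 0 ≤ S ω p i₀ := by
      rw [hS]
      refine mul_nonneg (by rw [hcast]; positivity) (Finset.sum_nonneg fun j _ => ?_)
      have hx0 : (0:ℝ) ≤ dist (z ω i₀) (z ω j) / r := div_nonneg dist_nonneg hr.le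
      have hc0 : 0 ≤ c (z ω i₀) (z ω j) := by
        rw [hc]
        exact div_nonneg (hcz_bnd _ (hz_mem ω i₀) _ hx0).1 hrd.le
      exact mul_nonneg (mul_nonneg
        (le_of_lt (lt_of_lt_of_le hamin (ha_bnd _ (hz_mem ω j)).1)) hc0) (hmem j).1
    have hSle : S ω p i₀ ≤ emin / Lf * M := by
      rw [hS, hcast]
      calc A / (m:ℝ) * ∑ j ∈ Finset.univ.erase i₀, a (z ω j) * c (z ω i₀) (z ω j) * p j
          ≤ A / (m:ℝ) * ((amax * cmax / r ^ d) * θ * M) := by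
            refine mul_le_mul_of_nonneg_left hsum (by positivity)
        _ = emin / Lf * M := by
            rw [hθdef]
            have hm0 : (m:ℝ) ≠ 0 := Nat.cast_ne_zero.2 (by omega)
            field_simp
    have hfS_le : f (S ω p i₀) ≤ emin * M := by
      have h1 : f (S ω p i₀) ≤ Lf * S ω p i₀ := by
        rw [hLf]
        exact concave_tangent_aux hf_conc hf_diff hf0 hS0
      have h2 : Lf * S ω p i₀ ≤ Lf * (emin / Lf * M) :=
        mul_le_mul_of_nonneg_left hSle hLf_pos.le
      have h3 : Lf * (emin / Lf * M) = emin * M := by field_simp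
      linarith
    have hfS0 : 0 ≤ f (S ω p i₀) := hf_nonneg _ hS0
    have he0 : emin ≤ e (z ω i₀) := (he_bnd _ (hz_mem ω i₀)).1
    have hden : 0 < e (z ω i₀) + f (S ω p i₀) := by linarith
    have heq : f (S ω p i₀) / (e (z ω i₀) + f (S ω p i₀)) = M := by
      have h := congrFun hfix i₀
      rwa [hEn] at h
    have hMden : M * (e (z ω i₀) + f (S ω p i₀)) = f (S ω p i₀) :=
      (eq_div_iff (ne_of_gt hden)).1 heq.symm
    have hMle : M ≤ 0 := by
      have k1 : f (S ω p i₀) * (1 - M) ≤ emin * M * (1 - M) :=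
        mul_le_mul_of_nonneg_right hfS_le (sub_nonneg.2 hM1)
      have k2 : emin * M * (1 - M) ≤ e (z ω i₀) * M * (1 - M) := by
        have := mul_le_mul_of_nonneg_right he0 (mul_nonneg hM0 (sub_nonneg.2 hM1))
        nlinarith [this]
      have k3 : M * e (z ω i₀) = f (S ω p i₀) * (1 - M) := by nlinarith [hMden]
      have k4 : e (z ω i₀) * M ^ 2 ≤ 0 := by nlinarith [k1, k2, k3]
      have k5 : M ^ 2 ≤ 0 := by
        by_contra hk
        push_neg at hk
        nlinarith [k4, lt_of_lt_of_le hemin he0]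
      nlinarith [k5, hM0]
    have hMeq : M = 0 := le_antisymm hMle hM0
    intro i
    exact le_antisymm (hMeq ▸ hmax i (Finset.mem_univ i)) (hmem i).1
  -- probability of each bad event
  have hexp_ineq : (m:ℝ) * qb - Real.log 2 * θ
      ≤ -C₂ * ((((m+1:ℕ):ℝ) - 1) * r ^ d / A) * (ρmax / (2 * amax)) ^ 2 := by
    have hkey : 2 * (Lf * (amax * cmax * σmax * vd)) ≤ emin := by
      have h := (div_le_iff₀ hemin).1 hnonviable
      rw [hρmax] at h; linarith
    have hθge : 2 * (m:ℝ) * qb ≤ θ := by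
      have e1 : 2 * (m:ℝ) * qb = (2 * (m:ℝ) * (σmax * vd * r ^ d)) / A := by
        rw [hqbdef]; ring
      rw [e1, hθdef, div_le_div_iff₀ hA_pos (by positivity : (0:ℝ) < Lf * A * amax * cmax)]
      have h2 : (0:ℝ) ≤ (m:ℝ) * r ^ d * A := by positivity
      nlinarith [mul_le_mul_of_nonneg_right hkey h2]
    have hC : C₂ * (ρmax / (2 * amax)) ^ 2 = σmax * vd / 12 := by
      rw [hC₂, hρmax]
      field_simp
      ring
    have hrhs : -C₂ * ((((m+1:ℕ):ℝ) - 1) * r ^ d / A) * (ρmax / (2 * amax)) ^ 2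
        = -((m:ℝ) * qb) / 12 := by
      have hcast : (((m+1:ℕ):ℝ) - 1) = (m:ℝ) := by push_cast; ring
      rw [hcast, hqbdef]
      have h3 : -C₂ * ((m:ℝ) * r ^ d / A) * (ρmax / (2 * amax)) ^ 2
          = -(C₂ * (ρmax / (2 * amax)) ^ 2) * ((m:ℝ) * r ^ d / A) := by ring
      rw [h3, hC]; ring
    rw [hrhs]
    have hlog2 : (0.6931471803:ℝ) < Real.log 2 := Real.log_two_gt_d9
    have hmqb0 : (0:ℝ) ≤ (m:ℝ) * qb := by positivity
    have h4 : Real.log 2 * (2 * (m:ℝ) * qb) ≤ Real.log 2 * θ :=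
      mul_le_mul_of_nonneg_left hθge (by linarith)
    nlinarith [hmqb0, hlog2, h4]
  have hBadBound : ∀ i, P (Bad i)
      ≤ ENNReal.ofReal (Real.exp (-C₂ * ((((m+1:ℕ):ℝ) - 1) * r ^ d / A)
          * (ρmax / (2 * amax)) ^ 2)) := by
    intro i
    set Ti : Set (Fin (m+1) → EuclideanSpace ℝ (Fin d)) :=
      {x | θ < ∑ j ∈ Finset.univ.erase i,
        (closedBall (x i) r).indicator (fun _ => (1:ℝ)) (x j)} with hTi
    have hsum_meas : Measurable fun x : Fin (m+1) → EuclideanSpace ℝ (Fin d) =>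
        ∑ j ∈ Finset.univ.erase i, (closedBall (x i) r).indicator (fun _ => (1:ℝ)) (x j) := by
      refine Finset.measurable_sum _ fun j _ => ?_
      have hite : (fun x : Fin (m+1) → EuclideanSpace ℝ (Fin d) =>
          (closedBall (x i) r).indicator (fun _ => (1:ℝ)) (x j))
          = fun x => if dist (x j) (x i) ≤ r then (1:ℝ) else 0 := by
        ext x; rw [indicator_apply]; simp [mem_closedBall]
      rw [hite]
      exact Measurable.ite (measurableSet_le
        ((continuous_apply j).dist (continuous_apply i)).measurable measurable_const)
        measurable_const measurable_const
    have hTi_meas : MeasurableSet Ti := measurableSet_lt measurable_const hsum_meas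
    have hPBad : P (Bad i) = (Measure.pi fun _ : Fin (m+1) => ν) Ti := by
      have hBadPre : Bad i = (fun ω (i' : Fin (m+1)) => z ω i') ⁻¹' Ti := by
        ext ω; simp [hBaddef, hTi]
      rw [hBadPre, ← Measure.map_apply hzvec_meas hTi_meas, ← hmap]
    set Ui : Set (EuclideanSpace ℝ (Fin d) × (Fin m → EuclideanSpace ℝ (Fin d))) :=
      {pr | θ < ∑ k : Fin m, (closedBall pr.1 r).indicator (fun _ => (1:ℝ)) (pr.2 k)} with hUi
    have hUi_meas : MeasurableSet Ui := by
      refine measurableSet_lt measurable_const ?_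
      refine Finset.measurable_sum _ fun k _ => ?_
      have hite : (fun pr : EuclideanSpace ℝ (Fin d) × (Fin m → EuclideanSpace ℝ (Fin d)) =>
          (closedBall pr.1 r).indicator (fun _ => (1:ℝ)) (pr.2 k))
          = fun pr => if dist (pr.2 k) pr.1 ≤ r then (1:ℝ) else 0 := by
        ext pr; rw [indicator_apply]; simp [mem_closedBall]
      rw [hite]
      exact Measurable.ite (measurableSet_le
        (((continuous_apply k).comp continuous_snd).dist continuous_fst).measurable
        measurable_const) measurable_const measurable_const
    have hTiU : Ti = (MeasurableEquiv.piFinSuccAbove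
        (fun _ : Fin (m+1) => EuclideanSpace ℝ (Fin d)) i) ⁻¹' Ui := by
      ext x
      have hx : (MeasurableEquiv.piFinSuccAbove
          (fun _ : Fin (m+1) => EuclideanSpace ℝ (Fin d)) i) x
          = (x i, fun k => x (i.succAbove k)) := by
        simp [MeasurableEquiv.piFinSuccAbove_apply]
        rfl
      simp only [hTi, hUi, mem_preimage, hx, mem_setOf_eq]
      have hre : ∑ j ∈ Finset.univ.erase i,
          (closedBall (x i) r).indicator (fun _ => (1:ℝ)) (x j)
          = ∑ k : Fin m, (closedBall (x i) r).indicator (fun _ => (1:ℝ)) (x (i.succAbove k)) := by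
        have h1 := Fin.sum_univ_succAbove
          (fun j => (closedBall (x i) r).indicator (fun _ => (1:ℝ)) (x j)) i
        have h2 := Finset.add_sum_erase Finset.univ
          (fun j => (closedBall (x i) r).indicator (fun _ => (1:ℝ)) (x j)) (Finset.mem_univ i)
        linarith
      rw [hre]
    have hmp := measurePreserving_piFinSuccAbove (fun _ : Fin (m+1) => ν) i
    have hstep : (Measure.pi fun _ : Fin (m+1) => ν) Ti
        = (ν.prod (Measure.pi fun _ : Fin m => ν)) Ui := by
      rw [hTiU]
      exact hmp.measure_preimage hUi_meas.nullMeasurableSet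
    rw [hPBad, hstep, Measure.prod_apply hUi_meas]
    have hinner : ∀ w : EuclideanSpace ℝ (Fin d),
        (Measure.pi fun _ : Fin m => ν) (Prod.mk w ⁻¹' Ui)
        ≤ ENNReal.ofReal (Real.exp ((m:ℝ) * qb - Real.log 2 * θ)) := by
      intro w
      have hpre : Prod.mk w ⁻¹' Ui
          = {y : Fin m → EuclideanSpace ℝ (Fin d) |
              θ < ∑ k, (closedBall w r).indicator (fun _ => (1:ℝ)) (y k)} := rfl
      rw [hpre]
      exact chernoff_count_aux ν m (closedBall w r) measurableSet_closedBall qb hqb0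
        (hball_law w) θ (hpi_prod m)
    calc ∫⁻ w, (Measure.pi fun _ : Fin m => ν) (Prod.mk w ⁻¹' Ui) ∂ν
        ≤ ∫⁻ _w, ENNReal.ofReal (Real.exp ((m:ℝ) * qb - Real.log 2 * θ)) ∂ν :=
          lintegral_mono hinner
      _ = ENNReal.ofReal (Real.exp ((m:ℝ) * qb - Real.log 2 * θ)) := by
          rw [lintegral_const, measure_univ, mul_one]
      _ ≤ _ := ENNReal.ofReal_le_ofReal (Real.exp_le_exp.2 hexp_ineq)
  -- assembling
  set E1 : ℝ := Real.exp (-C₂ * ((((m+1:ℕ):ℝ) - 1) * r ^ d / A)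
    * (ρmax / (2 * amax)) ^ 2) with hE1
  set E2 : ℝ := Real.exp (-((m+1:ℕ):ℝ)
    * sInf ((fun z₀ => A⁻¹ * ∫ y in Ω ∩ closedBall z₀ (r / 3), σ y) '' Ω)) with hE2
  have hE1pos : (0:ℝ) < E1 := Real.exp_pos _
  have hE2pos : (0:ℝ) < E2 := Real.exp_pos _
  have hsubset : (⋃ i, Bad i)ᶜ ⊆ {ω | ∀ i, pstar ω i = 0} := by
    intro ω hω
    exact hgood ω fun i' hi' => hω (mem_iUnion.2 ⟨i', hi'⟩)
  have hP1 : (1:ℝ≥0∞) ≤ P {ω | ∀ i, pstar ω i = 0}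
      + ENNReal.ofReal (2 * ((m+1:ℕ):ℝ) * E1) := by
    have hcover : (univ : Set W) ⊆ (⋃ i, Bad i)ᶜ ∪ (⋃ i, Bad i) := by
      rw [compl_union_self]
    calc (1:ℝ≥0∞) = P univ := measure_univ.symm
      _ ≤ P ((⋃ i, Bad i)ᶜ ∪ (⋃ i, Bad i)) := measure_mono hcover
      _ ≤ P ((⋃ i, Bad i)ᶜ) + P (⋃ i, Bad i) := measure_union_le _ _
      _ ≤ P {ω | ∀ i, pstar ω i = 0} + ENNReal.ofReal (2 * ((m+1:ℕ):ℝ) * E1) := by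
          refine add_le_add (measure_mono hsubset) ?_
          calc P (⋃ i, Bad i) ≤ ∑' i : Fin (m+1), P (Bad i) := measure_iUnion_le _
            _ ≤ ∑' i : Fin (m+1), ENNReal.ofReal E1 := by
                rw [tsum_fintype, tsum_fintype]
                exact Finset.sum_le_sum fun i _ => hBadBound i
            _ = ((m+1:ℕ):ℝ≥0∞) * ENNReal.ofReal E1 := by
                rw [tsum_fintype, Finset.sum_const, Finset.card_univ, Fintype.card_fin,
                  nsmul_eq_mul]
            _ ≤ ENNReal.ofReal (2 * ((m+1:ℕ):ℝ) * E1) := by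
                rw [show (2 * ((m+1:ℕ):ℝ) * E1) = ((m+1:ℕ):ℝ) * (2 * E1) by ring,
                  ENNReal.ofReal_mul (by positivity), ENNReal.ofReal_natCast]
                refine mul_le_mul_right (ENNReal.ofReal_le_ofReal (by linarith)) _
  have hsum_nonneg : (0:ℝ) ≤ 2 * ((m+1:ℕ):ℝ) * E1 + ((m+1:ℕ):ℝ) / 2 * E2 := by
    have h1 : (0:ℝ) ≤ 2 * ((m+1:ℕ):ℝ) * E1 := by positivity
    have h2 : (0:ℝ) ≤ ((m+1:ℕ):ℝ) / 2 * E2 := by positivity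
    linarith
  have hgoal : ENNReal.ofReal (1 - 2 * ((m+1:ℕ):ℝ) * E1 - ((m+1:ℕ):ℝ) / 2 * E2)
      ≤ P {ω | ∀ i, pstar ω i = 0} := by
    rw [sub_sub]
    rcases le_or_gt (1 - (2 * ((m+1:ℕ):ℝ) * E1 + ((m+1:ℕ):ℝ) / 2 * E2)) 0 with h | h
    · rw [ENNReal.ofReal_eq_zero.2 h]
      exact zero_le
    · rw [ENNReal.ofReal_sub _ hsum_nonneg, ENNReal.ofReal_one]
      refine tsub_le_iff_right.2 (le_trans hP1 (add_le_add le_rfl ?_))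
      refine ENNReal.ofReal_le_ofReal ?_
      have h2 : (0:ℝ) ≤ ((m+1:ℕ):ℝ) / 2 * E2 := by positivity
      linarith
  exact hgoal
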